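/- arXiv:2209.00686 — 12 statements merged into one kernel-verified Lean document; each statement's English description precedes it below -/
import Mathlib

section
/- Let κ be a closure operator on subsets of L and let D ⊆ L. Then D avoids partial loss if and only if D has a κ-coherent superset; and in that case the natural extension E_κ(D) := κ(D ∪ L⁺) is the smallest κ-coherent superset of D: it is κ-coherent, contains D, and is contained in every κ-coherent superset of D. -/
open Set

/-- The set of gambles: bounded real-valued functions on `Ω`. -/
def Gambles (Ω : Type*) : Set (Ω → ℝ) := {f | ∃ M : ℝ, ∀ ω, |f ω| ≤ M}

/-- `L⁺`: the positive gambles. -/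
def Lpos (Ω : Type*) : Set (Ω → ℝ) := {f ∈ Gambles Ω | 0 ≤ f ∧ f ≠ 0}

/-- `L⁻₀`: the nonpositive gambles. -/
def Lneg0 (Ω : Type*) : Set (Ω → ℝ) := {f ∈ Gambles Ω | f ≤ 0}

/-- A closure operator on the subsets of the set of gambles. -/
structure IsClosureOp (Ω : Type*) (κ : Set (Ω → ℝ) → Set (Ω → ℝ)) : Prop where
  maps_to : ∀ D ⊆ Gambles Ω, κ D ⊆ Gambles Ω
  extensive : ∀ D ⊆ Gambles Ω, D ⊆ κ D
  mono : ∀ ⦃D D' : Set (Ω → ℝ)⦄, D ⊆ Gambles Ω → D' ⊆ Gambles Ω → D ⊆ D' → κ D ⊆ κ D'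
  idem : ∀ D ⊆ Gambles Ω, κ (κ D) = κ D

/-- Natural extension `E_κ(D) = κ(D ∪ L⁺)`. -/
def natExt {Ω : Type*} (κ : Set (Ω → ℝ) → Set (Ω → ℝ)) (D : Set (Ω → ℝ)) : Set (Ω → ℝ) :=
  κ (D ∪ Lpos Ω)

/-- `D` avoids partial loss: `L⁻₀ ∩ E_κ(D) = ∅`. -/
def AvoidsPartialLoss {Ω : Type*} (κ : Set (Ω → ℝ) → Set (Ω → ℝ)) (D : Set (Ω → ℝ)) : Prop :=
  Lneg0 Ω ∩ natExt κ D = ∅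

/-- `D` is κ-coherent relative to `Q`. -/
def CoherentRel {Ω : Type*} (κ : Set (Ω → ℝ) → Set (Ω → ℝ)) (Q D : Set (Ω → ℝ)) : Prop :=
  AvoidsPartialLoss κ D ∧ Q ∩ natExt κ D ⊆ D

/-- `D` is κ-coherent: `κ(D ∪ L⁺) = D` and `D ∩ L⁻₀ = ∅`. -/
def Coherent {Ω : Type*} (κ : Set (Ω → ℝ) → Set (Ω → ℝ)) (D : Set (Ω → ℝ)) : Prop :=
  D ⊆ Gambles Ω ∧ κ (D ∪ Lpos Ω) = D ∧ D ∩ Lneg0 Ω = ∅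

/-- A set of gambles is closed under dominance. -/
def ClosedUnderDominance {Ω : Type*} (G : Set (Ω → ℝ)) : Prop :=
  G = {g | g ∈ Gambles Ω ∧ ∃ f ∈ G, f ≤ g}

/-- `K_d`: closure operators all of whose coherent sets are closed under dominance. -/
def InKd {Ω : Type*} (κ : Set (Ω → ℝ) → Set (Ω → ℝ)) : Prop :=
  IsClosureOp Ω κ ∧ ∀ D : Set (Ω → ℝ), Coherent κ D → ClosedUnderDominance D

/-- Lower prevision induced by `D`: `P_D(f) = sup {μ : f - μ ∈ D}`. -/
noncomputable def lowPrev {Ω : Type*} (D : Set (Ω → ℝ)) (f : Ω → ℝ) : ℝ :=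
  sSup {μ : ℝ | (f - fun _ => μ) ∈ D}

/-- Upper prevision induced by `D`: `Q_D(f) = inf {μ : μ - f ∈ D}`. -/
noncomputable def upPrev {Ω : Type*} (D : Set (Ω → ℝ)) (f : Ω → ℝ) : ℝ :=
  sInf {μ : ℝ | ((fun _ => μ) - f) ∈ D}

lemma lpos_sub {Ω : Type*} : Lpos Ω ⊆ Gambles Ω := fun f hf => hf.1

lemma union_sub {Ω : Type*} {D : Set (Ω → ℝ)} (hD : D ⊆ Gambles Ω) :
    D ∪ Lpos Ω ⊆ Gambles Ω := Set.union_subset hD lpos_sub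

lemma natExt_sub {Ω : Type*} {κ : Set (Ω → ℝ) → Set (Ω → ℝ)} (hκ : IsClosureOp Ω κ)
    {D : Set (Ω → ℝ)} (hD : D ⊆ Gambles Ω) : natExt κ D ⊆ Gambles Ω :=
  hκ.maps_to _ (union_sub hD)

lemma sub_natExt {Ω : Type*} {κ : Set (Ω → ℝ) → Set (Ω → ℝ)} (hκ : IsClosureOp Ω κ)
    {D : Set (Ω → ℝ)} (hD : D ⊆ Gambles Ω) : D ∪ Lpos Ω ⊆ natExt κ D :=
  hκ.extensive _ (union_sub hD)

lemma natExt_min {Ω : Type*} {κ : Set (Ω → ℝ) → Set (Ω → ℝ)} (hκ : IsClosureOp Ω κ)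
    {D D' : Set (Ω → ℝ)} (hD : D ⊆ Gambles Ω) (hc : Coherent κ D') (hDD : D ⊆ D') :
    natExt κ D ⊆ D' := by
  have : κ (D ∪ Lpos Ω) ⊆ κ (D' ∪ Lpos Ω) :=
    hκ.mono (union_sub hD) (union_sub hc.1) (Set.union_subset_union_left _ hDD)
  rw [hc.2.1] at this
  exact this

/-- `D` avoids partial loss iff it has a κ-coherent superset, and in
that case `E_κ(D)` is the smallest κ-coherent superset of `D`. -/
theorem stmt1 {Ω : Type*} [Nonempty Ω] (κ : Set (Ω → ℝ) → Set (Ω → ℝ))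
    (hκ : IsClosureOp Ω κ) (D : Set (Ω → ℝ)) (hD : D ⊆ Gambles Ω) :
    (AvoidsPartialLoss κ D ↔ ∃ D' : Set (Ω → ℝ), D ⊆ D' ∧ Coherent κ D') ∧
    (AvoidsPartialLoss κ D →
      Coherent κ (natExt κ D) ∧ D ⊆ natExt κ D ∧
        ∀ D' : Set (Ω → ℝ), Coherent κ D' → D ⊆ D' → natExt κ D ⊆ D') := by
  have hE : natExt κ D ⊆ Gambles Ω := natExt_sub hκ hD
  have hsub : D ∪ Lpos Ω ⊆ natExt κ D := sub_natExt hκ hD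
  have hDE : D ⊆ natExt κ D := (Set.union_subset_iff.mp hsub).1
  have key : ∀ _ : AvoidsPartialLoss κ D, Coherent κ (natExt κ D) := by
    intro hapl
    refine ⟨hE, ?_, ?_⟩
    · have h1 : natExt κ D ∪ Lpos Ω = natExt κ D :=
        Set.union_eq_self_of_subset_right ((Set.union_subset_iff.mp hsub).2)
      rw [h1]
      exact hκ.idem _ (union_sub hD)
    · rw [Set.inter_comm]; exact hapl
  constructor
  · constructor
    · intro hapl
      exact ⟨natExt κ D, hDE, key hapl⟩
    · rintro ⟨D', hDD, hc⟩
      have h := natExt_min hκ hD hc hDD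
      unfold AvoidsPartialLoss
      rw [Set.eq_empty_iff_forall_notMem]
      rintro f ⟨hf1, hf2⟩
      have : f ∈ D' ∩ Lneg0 Ω := ⟨h hf2, hf1⟩
      rw [hc.2.2] at this
      exact this
  · intro hapl
    exact ⟨key hapl, hDE, fun D' hc hDD => natExt_min hκ hD hc hDD⟩
end

section
/- Let Λ be a family of subsets of L, define κ_Λ(D) := ⋂{D' ∈ Λ : D ⊆ D'} when at least one member of Λ contains D and κ_Λ(D) := L otherwise, and let Λ_{κ_Λ} denote the family of κ_Λ-coherent sets. Then κ_Λ belongs to K_d and Λ_{κ_Λ} = Λ if and only if: every D' ∈ Λ is closed under dominance, satisfies L⁺ ⊆ D' and D' ∩ L⁻₀ = ∅, and Λ is closed under arbitrary nonempty intersections (the intersection of any nonempty subfamily of Λ belongs to Λ). -/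
open Set

-- The operator induced by a family `Λ` of subsets of the gambles:
-- `κ_Λ(D)` is the intersection of the members of `Λ` containing `D` if there is one,
-- and the whole set of gambles otherwise.
open Classical in
noncomputable def kLam {Ω : Type*} (Λ : Set (Set (Ω → ℝ))) (D : Set (Ω → ℝ)) :
    Set (Ω → ℝ) :=
  if ∃ D' ∈ Λ, D ⊆ D' then ⋂₀ {D' | D' ∈ Λ ∧ D ⊆ D'} else Gambles Ω
section Aux
variable {Ω : Type*}

lemma kLam_pos (Λ : Set (Set (Ω → ℝ))) {D : Set (Ω → ℝ)} (h : ∃ D' ∈ Λ, D ⊆ D') :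
    kLam Λ D = ⋂₀ {D' | D' ∈ Λ ∧ D ⊆ D'} := if_pos h

lemma kLam_neg (Λ : Set (Set (Ω → ℝ))) {D : Set (Ω → ℝ)} (h : ¬ ∃ D' ∈ Λ, D ⊆ D') :
    kLam Λ D = Gambles Ω := if_neg h

lemma cud_sub {G : Set (Ω → ℝ)} (h : ClosedUnderDominance G) : G ⊆ Gambles Ω := by
  intro g hg; rw [h] at hg; exact hg.1

lemma zero_mem_Gambles : (0 : Ω → ℝ) ∈ Gambles Ω := ⟨0, fun ω => by simp⟩

lemma zero_mem_Lneg0 : (0 : Ω → ℝ) ∈ Lneg0 Ω := ⟨zero_mem_Gambles, le_refl _⟩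

lemma lpos_sub_Gambles : Lpos Ω ⊆ Gambles Ω := fun f hf => hf.1

end Aux

/-- `κ_Λ` belongs to `K_d` and its family of coherent sets is exactly `Λ`
iff every member of `Λ` is closed under dominance, contains `L⁺`, is disjoint from
`L⁻₀`, and `Λ` is closed under arbitrary nonempty intersections. -/
theorem stmt5 {Ω : Type*} [Nonempty Ω] (Λ : Set (Set (Ω → ℝ))) :
    (InKd (kLam Λ) ∧ {D : Set (Ω → ℝ) | Coherent (kLam Λ) D} = Λ) ↔
      ((∀ D' ∈ Λ, ClosedUnderDominance D' ∧ Lpos Ω ⊆ D' ∧ D' ∩ Lneg0 Ω = ∅) ∧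
        ∀ H ⊆ Λ, H.Nonempty → ⋂₀ H ∈ Λ) := by
  constructor
  · rintro ⟨⟨hclo, hdom⟩, hcoh⟩
    have hcohΛ : ∀ D' ∈ Λ, Coherent (kLam Λ) D' := by
      intro D' h; rw [← hcoh] at h; exact h
    have hLp : ∀ D' ∈ Λ, Lpos Ω ⊆ D' := by
      intro D' hD'
      have hc := hcohΛ D' hD'
      have hsub : D' ∪ Lpos Ω ⊆ Gambles Ω := union_subset hc.1 lpos_sub_Gambles
      have h2 := hclo.extensive _ hsub
      rw [hc.2.1] at h2
      exact (union_subset_iff.mp h2).2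
    constructor
    · intro D' hD'
      have hc := hcohΛ D' hD'
      exact ⟨hdom D' hc, hLp D' hD', hc.2.2⟩
    · intro H hHΛ hHne
      obtain ⟨E, hE⟩ := hHne
      have hcE := hcohΛ E (hHΛ hE)
      have hGsub : ⋂₀ H ⊆ Gambles Ω := (sInter_subset_of_mem hE).trans hcE.1
      have hLpG : Lpos Ω ⊆ ⋂₀ H := subset_sInter fun E' hE' => hLp E' (hHΛ hE')
      rw [← hcoh]
      refine ⟨hGsub, ?_, ?_⟩
      · have hun : ⋂₀ H ∪ Lpos Ω = ⋂₀ H := union_eq_self_of_subset_right hLpG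
        rw [hun]
        have hex : ∃ D' ∈ Λ, ⋂₀ H ⊆ D' := ⟨E, hHΛ hE, sInter_subset_of_mem hE⟩
        rw [kLam_pos Λ hex]
        refine Subset.antisymm ?_ ?_
        · exact subset_sInter fun E' hE' =>
            sInter_subset_of_mem ⟨hHΛ hE', sInter_subset_of_mem hE'⟩
        · have h3 := hclo.extensive _ hGsub
          rwa [kLam_pos Λ hex] at h3
      · apply eq_empty_of_subset_empty
        rw [← hcE.2.2]
        exact inter_subset_inter_left _ (sInter_subset_of_mem hE)
  · rintro ⟨hmem, hint⟩
    have hsubG : ∀ D' ∈ Λ, D' ⊆ Gambles Ω := fun D' h => cud_sub (hmem D' h).1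
    have hmaps : ∀ D ⊆ Gambles Ω, kLam Λ D ⊆ Gambles Ω := by
      intro D hD
      by_cases h : ∃ D' ∈ Λ, D ⊆ D'
      · obtain ⟨E, hE, hDE⟩ := h
        rw [kLam_pos Λ ⟨E, hE, hDE⟩]
        exact (sInter_subset_of_mem (⟨hE, hDE⟩ : E ∈ {D' | D' ∈ Λ ∧ D ⊆ D'})).trans (hsubG E hE)
      · rw [kLam_neg Λ h]
    have hext : ∀ D ⊆ Gambles Ω, D ⊆ kLam Λ D := by
      intro D hD
      by_cases h : ∃ D' ∈ Λ, D ⊆ D'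
      · rw [kLam_pos Λ h]
        exact subset_sInter fun E hE => hE.2
      · rw [kLam_neg Λ h]; exact hD
    have hfixΛ : ∀ G ∈ Λ, kLam Λ G = G := by
      intro G hG
      rw [kLam_pos Λ ⟨G, hG, Subset.rfl⟩]
      exact Subset.antisymm (sInter_subset_of_mem ⟨hG, Subset.rfl⟩)
        (subset_sInter fun E hE => hE.2)
    have hclo : IsClosureOp Ω (kLam Λ) := by
      refine ⟨hmaps, hext, ?_, ?_⟩
      · intro D D' hD hD' hDD'
        by_cases h' : ∃ E ∈ Λ, D' ⊆ E
        · obtain ⟨E, hE, hE'⟩ := h'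
          rw [kLam_pos Λ ⟨E, hE, hE'⟩, kLam_pos Λ ⟨E, hE, hDD'.trans hE'⟩]
          exact subset_sInter fun F hF =>
            sInter_subset_of_mem ⟨hF.1, hDD'.trans hF.2⟩
        · rw [kLam_neg Λ h']; exact hmaps D hD
      · intro D hD
        by_cases h : ∃ D' ∈ Λ, D ⊆ D'
        · rw [kLam_pos Λ h]
          have hne : {D' | D' ∈ Λ ∧ D ⊆ D'}.Nonempty := by
            obtain ⟨E, hE, hDE⟩ := h; exact ⟨E, hE, hDE⟩
          have hGΛ : ⋂₀ {D' | D' ∈ Λ ∧ D ⊆ D'} ∈ Λ :=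
            hint _ (fun E hE => hE.1) hne
          exact hfixΛ _ hGΛ
        · rw [kLam_neg Λ h]
          apply kLam_neg
          rintro ⟨E, hE, hGE⟩
          exact h ⟨E, hE, hD.trans hGE⟩
    have hcohΛeq : {D : Set (Ω → ℝ) | Coherent (kLam Λ) D} = Λ := by
      ext D
      constructor
      · rintro ⟨hDG, hfix, hdisj⟩
        by_cases h : ∃ D' ∈ Λ, D ∪ Lpos Ω ⊆ D'
        · rw [kLam_pos Λ h] at hfix
          have hne : {D' | D' ∈ Λ ∧ D ∪ Lpos Ω ⊆ D'}.Nonempty := by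
            obtain ⟨E, hE, hDE⟩ := h; exact ⟨E, hE, hDE⟩
          have := hint _ (fun E (hE : E ∈ {D' | D' ∈ Λ ∧ D ∪ Lpos Ω ⊆ D'}) => hE.1) hne
          rwa [hfix] at this
        · exfalso
          rw [kLam_neg Λ h] at hfix
          have h0 : (0 : Ω → ℝ) ∈ D ∩ Lneg0 Ω := by
            refine ⟨?_, zero_mem_Lneg0⟩
            rw [← hfix]; exact zero_mem_Gambles
          rw [hdisj] at h0
          exact h0
      · intro hD
        obtain ⟨_, hLp, hdisj⟩ := hmem D hD
        have hun : D ∪ Lpos Ω = D := union_eq_self_of_subset_right hLp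
        exact ⟨hsubG D hD, by rw [hun]; exact hfixΛ D hD, hdisj⟩
    refine ⟨⟨hclo, ?_⟩, hcohΛeq⟩
    intro D hD
    have : D ∈ Λ := by rw [← hcohΛeq]; exact hD
    exact (hmem D this).1
end

section
/- Let κ₂ be the closure operator defined by κ₂(D) := {f₁ + … + f_n : n ≥ 1, f₁, …, f_n ∈ D}. A κ₂-coherent set D ⊆ L is κ₂-maximal (it has no κ₂-coherent strict superset) if and only if it is κ₂-decisive (for every gamble f ≠ 0 exactly one of f and −f belongs to D). -/
open Set

/-- The closure operator `κ₂`, mapping `D` to the set of all finite sums (with at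
least one summand) of elements of `D`. -/
def k2 {Ω : Type*} (D : Set (Ω → ℝ)) : Set (Ω → ℝ) :=
  {g | ∃ l : List (Ω → ℝ), l ≠ [] ∧ (∀ f ∈ l, f ∈ D) ∧ g = l.sum}

namespace Stmt7Aux

variable {Ω : Type*}

lemma k2_extensive (D : Set (Ω → ℝ)) : D ⊆ k2 D := by
  intro f hf
  exact ⟨[f], by simp, by simp [hf], by simp⟩

lemma k2_mono {D D' : Set (Ω → ℝ)} (h : D ⊆ D') : k2 D ⊆ k2 D' := by
  rintro g ⟨l, hl, hm, rfl⟩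
  exact ⟨l, hl, fun f hf => h (hm f hf), rfl⟩

lemma add_mem_k2 {D : Set (Ω → ℝ)} {a b : Ω → ℝ} (ha : a ∈ k2 D) (hb : b ∈ k2 D) :
    a + b ∈ k2 D := by
  obtain ⟨l1, h1, h1m, rfl⟩ := ha
  obtain ⟨l2, h2, h2m, rfl⟩ := hb
  refine ⟨l1 ++ l2, by simp [h1], fun f hf => ?_, (List.sum_append).symm⟩
  rcases List.mem_append.mp hf with h | h
  exacts [h1m f h, h2m f h]

lemma list_sum_mem_k2 {D : Set (Ω → ℝ)} :
    ∀ l : List (Ω → ℝ), l ≠ [] → (∀ f ∈ l, f ∈ k2 D) → l.sum ∈ k2 D := by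
  intro l
  induction l with
  | nil => intro h; exact absurd rfl h
  | cons x l ih =>
    intro _ hm
    rcases eq_or_ne l [] with rfl | hl
    · simpa using hm x (by simp)
    · have hx : x ∈ k2 D := hm x (by simp)
      have hs : l.sum ∈ k2 D := ih hl (fun f hf => hm f (by simp [hf]))
      simpa using add_mem_k2 hx hs

lemma k2_idem (D : Set (Ω → ℝ)) : k2 (k2 D) = k2 D := by
  apply Set.Subset.antisymm
  · rintro g ⟨l, hl, hm, rfl⟩
    exact list_sum_mem_k2 l hl hm
  · exact k2_extensive _

lemma k2_subset_gambles {D : Set (Ω → ℝ)} (h : D ⊆ Gambles Ω) : k2 D ⊆ Gambles Ω := by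
  rintro g ⟨l, _, hm, rfl⟩
  clear * - h hm
  induction l with
  | nil => exact ⟨0, by simp⟩
  | cons x l ih =>
    obtain ⟨M1, hM1⟩ : x ∈ Gambles Ω := h (hm x (by simp))
    obtain ⟨M2, hM2⟩ := ih (fun f hf => hm f (by simp [hf]))
    refine ⟨M1 + M2, fun ω => ?_⟩
    calc |(x :: l).sum ω| = |x ω + l.sum ω| := by simp
      _ ≤ |x ω| + |l.sum ω| := abs_add_le _ _
      _ ≤ M1 + M2 := add_le_add (hM1 ω) (hM2 ω)

lemma coh_Lpos {D : Set (Ω → ℝ)} (hD : Coherent k2 D) : Lpos Ω ⊆ D := by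
  intro f hf
  have : f ∈ k2 (D ∪ Lpos Ω) := k2_extensive _ (Or.inr hf)
  rwa [hD.2.1] at this

lemma coh_k2 {D : Set (Ω → ℝ)} (hD : Coherent k2 D) : k2 D = D := by
  apply Set.Subset.antisymm
  · intro g hg
    have : g ∈ k2 (D ∪ Lpos Ω) := k2_mono Set.subset_union_left hg
    rwa [hD.2.1] at this
  · exact k2_extensive _

lemma coh_add {D : Set (Ω → ℝ)} (hD : Coherent k2 D) {a b : Ω → ℝ}
    (ha : a ∈ D) (hb : b ∈ D) : a + b ∈ D := by
  rw [← coh_k2 hD]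
  exact add_mem_k2 (k2_extensive _ ha) (k2_extensive _ hb)

lemma coh_not_neg {D : Set (Ω → ℝ)} (hD : Coherent k2 D) {g : Ω → ℝ}
    (hg : g ∈ D) (hgG : g ∈ Gambles Ω) (hle : ∀ ω, g ω ≤ 0) : False := by
  have : g ∈ D ∩ Lneg0 Ω := ⟨hg, hgG, fun ω => hle ω⟩
  rw [hD.2.2] at this
  exact this

lemma coh_nsmul {D : Set (Ω → ℝ)} (hD : Coherent k2 D) {d : Ω → ℝ} (hd : d ∈ D) :
    ∀ n : ℕ, 0 < n → (fun ω => (n : ℝ) * d ω) ∈ D := by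
  intro n hn
  induction n with
  | zero => exact absurd hn (by simp)
  | succ n ih =>
    rcases Nat.eq_zero_or_pos n with rfl | hn'
    · simpa using hd
    · have := coh_add hD (ih hn') hd
      have heq : (fun ω => ((n + 1 : ℕ) : ℝ) * d ω)
          = (fun ω => (n : ℝ) * d ω) + d := by
        funext ω; simp [Pi.add_apply]; ring
      rw [heq]; exact this

/-- Shape predicate for elements of `k2 (insert f D)`. -/
def Shape (D : Set (Ω → ℝ)) (f g : Ω → ℝ) : Prop :=
  g ∈ D ∨ (∃ n : ℕ, 0 < n ∧ g = fun ω => (n : ℝ) * f ω) ∨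
    (∃ n : ℕ, 0 < n ∧ ∃ d ∈ D, g = fun ω => (n : ℝ) * f ω + d ω)

lemma shape_add_mem {D : Set (Ω → ℝ)} (hD : Coherent k2 D) {f x g : Ω → ℝ}
    (hx : x ∈ insert f D) (hg : Shape D f g) : Shape D f (x + g) := by
  rcases hx with rfl | hxD
  · rcases hg with hgD | ⟨n, hn, rfl⟩ | ⟨n, hn, d, hd, rfl⟩
    · exact Or.inr (Or.inr ⟨1, one_pos, g, hgD, by funext ω; simp⟩)
    · refine Or.inr (Or.inl ⟨n + 1, by omega, ?_⟩)
      funext ω; simp [Pi.add_apply]; ring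
    · refine Or.inr (Or.inr ⟨n + 1, by omega, d, hd, ?_⟩)
      funext ω; simp [Pi.add_apply]; ring
  · rcases hg with hgD | ⟨n, hn, rfl⟩ | ⟨n, hn, d, hd, rfl⟩
    · exact Or.inl (coh_add hD hxD hgD)
    · refine Or.inr (Or.inr ⟨n, hn, x, hxD, ?_⟩)
      funext ω; simp [Pi.add_apply]; ring
    · refine Or.inr (Or.inr ⟨n, hn, x + d, coh_add hD hxD hd, ?_⟩)
      funext ω; simp [Pi.add_apply]; ring

/-- Characterization of `k2 (insert f D)` for coherent `D`. -/
lemma mem_k2_insert {D : Set (Ω → ℝ)} (hD : Coherent k2 D) (f : Ω → ℝ) {g : Ω → ℝ}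
    (hg : g ∈ k2 (insert f D)) : Shape D f g := by
  obtain ⟨l, hl, hm, rfl⟩ := hg
  induction l with
  | nil => exact absurd rfl hl
  | cons x l ih =>
    have hx : x ∈ insert f D := hm x (by simp)
    rcases eq_or_ne l [] with rfl | hl'
    · simp only [List.sum_cons, List.sum_nil, add_zero]
      rcases hx with rfl | hxD
      · exact Or.inr (Or.inl ⟨1, one_pos, by funext ω; simp⟩)
      · exact Or.inl hxD
    · have hs : Shape D f l.sum := ih hl' (fun a ha => hm a (by simp [ha]))
      simpa using shape_add_mem hD hx hs

/-- Extension lemma: if adding `f` keeps avoiding loss, we get a coherent strict superset. -/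
lemma extension {D : Set (Ω → ℝ)} (hD : Coherent k2 D) {f : Ω → ℝ}
    (hfG : f ∈ Gambles Ω) (hfD : f ∉ D)
    (hne : k2 (insert f D) ∩ Lneg0 Ω = ∅) :
    Coherent k2 (k2 (insert f D)) ∧ D ⊂ k2 (insert f D) := by
  have hins : insert f D ⊆ Gambles Ω := by
    intro x hx
    rcases hx with rfl | hxD
    · exact hfG
    · exact hD.1 hxD
  have hsub : k2 (insert f D) ⊆ Gambles Ω := k2_subset_gambles hins
  have hLpos : Lpos Ω ⊆ k2 (insert f D) :=
    fun x hx => k2_extensive _ (Set.mem_insert_iff.mpr (Or.inr (coh_Lpos hD hx)))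
  have hunion : k2 (insert f D) ∪ Lpos Ω = k2 (insert f D) :=
    Set.union_eq_self_of_subset_right hLpos
  refine ⟨⟨hsub, ?_, hne⟩, ?_⟩
  · rw [hunion, k2_idem]
  · constructor
    · exact fun x hx => k2_extensive _ (Set.mem_insert_iff.mpr (Or.inr hx))
    · intro hcon
      exact hfD (hcon (k2_extensive _ (Set.mem_insert _ _)))

end Stmt7Aux

open Stmt7Aux in

/-- a κ₂-coherent set is κ₂-maximal (no κ₂-coherent strict superset)
iff it is κ₂-decisive (for every gamble `f ≠ 0`, exactly one of `f`, `-f` is in `D`). -/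
theorem stmt7 {Ω : Type*} [Nonempty Ω] (D : Set (Ω → ℝ)) (hD : Coherent k2 D) :
    (¬ ∃ D' : Set (Ω → ℝ), Coherent k2 D' ∧ D ⊂ D') ↔
      (∀ f ∈ Gambles Ω, f ≠ 0 → Xor' (f ∈ D) (-f ∈ D)) := by
  have hnotboth : ∀ f : Ω → ℝ, f ∈ D → -f ∈ D → False := by
    intro f hf hnf
    have h0 : f + (-f) ∈ D := coh_add hD hf hnf
    rw [add_neg_cancel] at h0
    exact coh_not_neg hD h0 ⟨0, by simp⟩ (by simp)
  constructor
  · -- maximal → decisive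
    intro hmax f hfG hf0
    by_cases hf : f ∈ D
    · exact Or.inl ⟨hf, fun hnf => hnotboth f hf hnf⟩
    · by_cases hnf : -f ∈ D
      · exact Or.inr ⟨hnf, hf⟩
      exfalso
      -- both extensions must hit Lneg0
      have hne1 : k2 (insert f D) ∩ Lneg0 Ω ≠ ∅ := by
        intro h
        obtain ⟨hcoh, hss⟩ := extension hD hfG hf h
        exact hmax ⟨_, hcoh, hss⟩
      have hne2 : k2 (insert (-f) D) ∩ Lneg0 Ω ≠ ∅ := by
        intro h
        obtain ⟨hcoh, hss⟩ := extension hD (by obtain ⟨M, hM⟩ := hfG; exact ⟨M, by simpa using hM⟩) hnf h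
        exact hmax ⟨_, hcoh, hss⟩
      obtain ⟨g1, hg1k, hg1G, hg1le⟩ := Set.nonempty_iff_ne_empty.mpr hne1
      obtain ⟨g2, hg2k, hg2G, hg2le⟩ := Set.nonempty_iff_ne_empty.mpr hne2
      have hle1 : ∀ ω, g1 ω ≤ 0 := fun ω => hg1le ω
      have hle2 : ∀ ω, g2 ω ≤ 0 := fun ω => hg2le ω
      have hs1 := mem_k2_insert hD f hg1k
      have hs2 := mem_k2_insert hD (-f) hg2k
      rcases hs1 with h1D | ⟨n, hn, rfl⟩ | ⟨n, hn, d, hd, rfl⟩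
      · exact coh_not_neg hD h1D hg1G hle1
      · rcases hs2 with h2D | ⟨m, hm, rfl⟩ | ⟨m, hm, d', hd', rfl⟩
        · exact coh_not_neg hD h2D hg2G hle2
        · apply hf0
          funext ω
          have h1 : (n : ℝ) * f ω ≤ 0 := hle1 ω
          have h2 : (m : ℝ) * -(f ω) ≤ 0 := hle2 ω
          have hn' : (0 : ℝ) < n := by exact_mod_cast hn
          have hm' : (0 : ℝ) < m := by exact_mod_cast hm
          show f ω = 0
          nlinarith
        · refine coh_not_neg hD hd' (hD.1 hd') (fun ω => ?_)
          have h1 : (n : ℝ) * f ω ≤ 0 := hle1 ω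
          have h2 : (m : ℝ) * -(f ω) + d' ω ≤ 0 := hle2 ω
          have hn' : (0 : ℝ) < n := by exact_mod_cast hn
          have hm' : (0 : ℝ) < m := by exact_mod_cast hm
          nlinarith
      · rcases hs2 with h2D | ⟨m, hm, rfl⟩ | ⟨m, hm, d', hd', rfl⟩
        · exact coh_not_neg hD h2D hg2G hle2
        · refine coh_not_neg hD hd (hD.1 hd) (fun ω => ?_)
          have h1 : (n : ℝ) * f ω + d ω ≤ 0 := hle1 ω
          have h2 : (m : ℝ) * -(f ω) ≤ 0 := hle2 ω
          have hn' : (0 : ℝ) < n := by exact_mod_cast hn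
          have hm' : (0 : ℝ) < m := by exact_mod_cast hm
          nlinarith
        · have hmd : (fun ω => (m : ℝ) * d ω) ∈ D := coh_nsmul hD hd m hm
          have hnd' : (fun ω => (n : ℝ) * d' ω) ∈ D := coh_nsmul hD hd' n hn
          have hsum : (fun ω => (m : ℝ) * d ω) + (fun ω => (n : ℝ) * d' ω) ∈ D :=
            coh_add hD hmd hnd'
          refine coh_not_neg hD hsum (hD.1 hsum) (fun ω => ?_)
          have h1 : (n : ℝ) * f ω + d ω ≤ 0 := hle1 ω
          have h2 : (m : ℝ) * -(f ω) + d' ω ≤ 0 := hle2 ω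
          have hn' : (0 : ℝ) < n := by exact_mod_cast hn
          have hm' : (0 : ℝ) < m := by exact_mod_cast hm
          show (m : ℝ) * d ω + (n : ℝ) * d' ω ≤ 0
          nlinarith
  · -- decisive → maximal
    rintro hdec ⟨D', hD', hss⟩
    obtain ⟨hsub, hne⟩ := hss
    obtain ⟨g, hgD', hgD⟩ := Set.not_subset.mp hne
    have hgG : g ∈ Gambles Ω := hD'.1 hgD'
    have hg0 : g ≠ 0 := by
      rintro rfl
      exact coh_not_neg hD' hgD' hgG (by simp)
    rcases hdec g hgG hg0 with ⟨hg, _⟩ | ⟨hng, _⟩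
    · exact hgD hg
    · have hngD' : -g ∈ D' := hsub hng
      have h0 : g + (-g) ∈ D' := coh_add hD' hgD' hngD'
      rw [add_neg_cancel] at h0
      exact coh_not_neg hD' h0 ⟨0, by simp⟩ (by simp)
end

section
/- Let κ be a closure operator, let D ⊆ L be κ-coherent, and let B be a nonempty subset of Ω. Then the conditional set D|B := D ∩ L|B is κ-coherent relative to L|B, where L|B := {f ∈ L : f = 1_B·f} is the set of gambles vanishing outside B; that is, D|B avoids partial loss and L|B ∩ E_κ(D|B) ⊆ D|B. -/
open Set

/-- `L|B`: the gambles vanishing outside `B`, i.e. with `f = 1_B·f`. -/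
def Lcond {Ω : Type*} (B : Set Ω) : Set (Ω → ℝ) :=
  {f ∈ Gambles Ω | f = B.indicator f}

/-- the conditional set `D|B = D ∩ L|B` of a κ-coherent set `D` is
κ-coherent relative to `L|B`. -/
theorem stmt9 {Ω : Type*} [Nonempty Ω] (κ : Set (Ω → ℝ) → Set (Ω → ℝ))
    (hκ : IsClosureOp Ω κ) (D : Set (Ω → ℝ)) (hD : Coherent κ D)
    (B : Set Ω) (hB : B.Nonempty) :
    CoherentRel κ (Lcond B) (D ∩ Lcond B) := by
  obtain ⟨hDG, hfix, hneg⟩ := hD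
  have hsubG : D ∩ Lcond B ∪ Lpos Ω ⊆ Gambles Ω := by
    rintro f (⟨hf, _⟩ | hf)
    · exact hDG hf
    · exact hf.1
  have hsubG2 : D ∪ Lpos Ω ⊆ Gambles Ω := by
    rintro f (hf | hf)
    · exact hDG hf
    · exact hf.1
  have hsub : natExt κ (D ∩ Lcond B) ⊆ D := by
    have := hκ.mono hsubG hsubG2 (by
      rintro f (⟨hf, _⟩ | hf)
      · exact Or.inl hf
      · exact Or.inr hf)
    rw [hfix] at this
    exact this
  constructor
  · rw [AvoidsPartialLoss, Set.eq_empty_iff_forall_notMem]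
    rintro f ⟨hf1, hf2⟩
    exact Set.eq_empty_iff_forall_notMem.mp hneg f ⟨hsub hf2, hf1⟩
  · rintro f ⟨hf1, hf2⟩
    exact ⟨hsub hf2, hf1⟩
end

section
/- Let κ ∈ K_d and let D ⊆ L be κ-coherent, with induced lower prevision P_D(f) := sup{μ ∈ ℝ : f − μ ∈ D} and upper prevision Q_D(f) := inf{μ ∈ ℝ : μ − f ∈ D}. Then P_D(f) ≤ Q_D(f) holds for every gamble f if and only if there do not exist g₁, g₂ ∈ D and ε > 0 such that g₁ + g₂ is the constant gamble with value −ε. -/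
open Set

section Helpers

variable {Ω : Type*} [Nonempty Ω] {κ : Set (Ω → ℝ) → Set (Ω → ℝ)} {D : Set (Ω → ℝ)}

lemma Lpos_subset_coherent (hκ : InKd κ) (hD : Coherent κ D) : Lpos Ω ⊆ D := by
  have h1 : D ∪ Lpos Ω ⊆ Gambles Ω := union_subset hD.1 (fun f hf => hf.1)
  have h2 := hκ.1.extensive _ h1
  rw [hD.2.1] at h2
  exact fun f hf => h2 (Or.inr hf)

lemma bddAbove_lowSet (hD : Coherent κ D) {f : Ω → ℝ} {M : ℝ} (hM : ∀ ω, |f ω| ≤ M) :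
    BddAbove {μ : ℝ | (f - fun _ => μ) ∈ D} := by
  refine ⟨M, fun μ hμ => ?_⟩
  by_contra h
  push_neg at h
  have hmem : (f - fun _ => μ) ∈ D ∩ Lneg0 Ω := by
    refine ⟨hμ, ⟨M + |μ|, fun ω => ?_⟩, fun ω => ?_⟩
    · show |f ω - μ| ≤ M + |μ|
      calc |f ω - μ| ≤ |f ω| + |μ| := abs_sub _ _
        _ ≤ M + |μ| := by linarith [hM ω]
    · have := (abs_le.mp (hM ω)).2
      show f ω - μ ≤ 0
      linarith
  rw [hD.2.2] at hmem
  exact hmem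

lemma bddBelow_upSet (hD : Coherent κ D) {f : Ω → ℝ} {M : ℝ} (hM : ∀ ω, |f ω| ≤ M) :
    BddBelow {μ : ℝ | ((fun _ => μ) - f) ∈ D} := by
  refine ⟨-M, fun μ hμ => ?_⟩
  by_contra h
  push_neg at h
  have hmem : ((fun _ => μ) - f) ∈ D ∩ Lneg0 Ω := by
    refine ⟨hμ, ⟨M + |μ|, fun ω => ?_⟩, fun ω => ?_⟩
    · show |μ - f ω| ≤ M + |μ|
      calc |μ - f ω| ≤ |μ| + |f ω| := abs_sub _ _
        _ ≤ M + |μ| := by linarith [hM ω]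
    · have := (abs_le.mp (hM ω)).1
      show μ - f ω ≤ 0
      linarith
  rw [hD.2.2] at hmem
  exact hmem

lemma nonempty_lowSet (hκ : InKd κ) (hD : Coherent κ D) {f : Ω → ℝ} {M : ℝ}
    (hM : ∀ ω, |f ω| ≤ M) : {μ : ℝ | (f - fun _ => μ) ∈ D}.Nonempty := by
  refine ⟨-(M + 1), Lpos_subset_coherent hκ hD ?_⟩
  have hlb : ∀ ω, (1 : ℝ) ≤ f ω - (-(M + 1)) := fun ω => by
    have := (abs_le.mp (hM ω)).1; linarith
  refine ⟨⟨2 * M + 1, fun ω => ?_⟩, fun ω => by have := hlb ω; simp only [Pi.sub_apply, Pi.zero_apply]; linarith,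
    fun h0 => ?_⟩
  · have h1 := (abs_le.mp (hM ω)).1
    have h2 := (abs_le.mp (hM ω)).2
    have : |f ω - (-(M + 1))| ≤ 2 * M + 1 := by rw [abs_le]; constructor <;> linarith
    exact this
  · obtain ⟨ω⟩ := ‹Nonempty Ω›
    have := congrFun h0 ω
    have := hlb ω
    simp only [Pi.sub_apply] at *
    simp only [Pi.zero_apply] at *
    linarith

lemma nonempty_upSet (hκ : InKd κ) (hD : Coherent κ D) {f : Ω → ℝ} {M : ℝ}
    (hM : ∀ ω, |f ω| ≤ M) : {μ : ℝ | ((fun _ => μ) - f) ∈ D}.Nonempty := by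
  refine ⟨M + 1, Lpos_subset_coherent hκ hD ?_⟩
  have hlb : ∀ ω, (1 : ℝ) ≤ (M + 1) - f ω := fun ω => by
    have := (abs_le.mp (hM ω)).2; linarith
  refine ⟨⟨2 * M + 1, fun ω => ?_⟩, fun ω => by have := hlb ω; simp only [Pi.sub_apply, Pi.zero_apply]; linarith,
    fun h0 => ?_⟩
  · have h1 := (abs_le.mp (hM ω)).1
    have h2 := (abs_le.mp (hM ω)).2
    have : |(M + 1) - f ω| ≤ 2 * M + 1 := by rw [abs_le]; constructor <;> linarith
    exact this
  · obtain ⟨ω⟩ := ‹Nonempty Ω›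
    have := congrFun h0 ω
    have := hlb ω
    simp only [Pi.sub_apply, Pi.zero_apply] at *
    linarith

end Helpers

/-- `P_D(f) ≤ Q_D(f)` for every gamble `f` iff there are no
`g₁, g₂ ∈ D` and `ε > 0` with `g₁ + g₂ = -ε` (constant). -/
theorem stmt12 {Ω : Type*} [Nonempty Ω] (κ : Set (Ω → ℝ) → Set (Ω → ℝ))
    (hκ : InKd κ) (D : Set (Ω → ℝ)) (hD : Coherent κ D) :
    (∀ f ∈ Gambles Ω, lowPrev D f ≤ upPrev D f) ↔
      ¬ ∃ g₁ ∈ D, ∃ g₂ ∈ D, ∃ ε : ℝ, 0 < ε ∧ g₁ + g₂ = (fun _ => -ε) := by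
  constructor
  · rintro h ⟨g₁, hg₁, g₂, hg₂, ε, hε, hsum⟩
    obtain ⟨M, hM⟩ := hD.1 hg₁
    have hP : (0 : ℝ) ≤ lowPrev D g₁ := by
      apply le_csSup (bddAbove_lowSet hD hM)
      show (g₁ - fun _ => (0:ℝ)) ∈ D
      have : (g₁ - fun _ => (0:ℝ)) = g₁ := by funext ω; simp
      rwa [this]
    have hQ : upPrev D g₁ ≤ -ε := by
      apply csInf_le (bddBelow_upSet hD hM)
      show ((fun _ => -ε) - g₁) ∈ D
      have : ((fun _ => -ε) - g₁) = g₂ := by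
        funext ω; have := congrFun hsum ω
        simp only [Pi.add_apply] at this
        simp only [Pi.sub_apply]; linarith
      rwa [this]
    have := h g₁ ⟨M, hM⟩
    linarith
  · intro h f hf
    obtain ⟨M, hM⟩ := hf
    by_contra hlt
    push_neg at hlt
    have hQP : upPrev D f < lowPrev D f := hlt
    obtain ⟨b, hb, hbP⟩ := (csInf_lt_iff (bddBelow_upSet hD hM)
      (nonempty_upSet hκ hD hM)).mp hQP
    obtain ⟨a, ha, hba⟩ := (lt_csSup_iff (bddAbove_lowSet hD hM)
      (nonempty_lowSet hκ hD hM)).mp hbP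
    refine h ⟨f - fun _ => a, ha, (fun _ => b) - f, hb, a - b, by linarith, ?_⟩
    funext ω
    simp only [Pi.add_apply, Pi.sub_apply]
    ring
end

section
/- Let κ ∈ K_d and let D ⊆ L be κ-coherent with induced lower prevision P_D(f) := sup{μ ∈ ℝ : f − μ ∈ D} and upper prevision Q_D(f) := inf{μ ∈ ℝ : μ − f ∈ D}, and assume P_D(f) ≤ Q_D(f) for every gamble f. Then P_D(f) = Q_D(f) holds for every gamble f if and only if for every gamble f not in D and every ε > 0 the gamble ε − f belongs to D. -/
open Set

/-- if `P_D ≤ Q_D` on all gambles, then `P_D = Q_D` on all gambles iff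
for every gamble `f ∉ D` and every `ε > 0`, `ε - f ∈ D`. -/
theorem stmt13 {Ω : Type*} [Nonempty Ω] (κ : Set (Ω → ℝ) → Set (Ω → ℝ))
    (hκ : InKd κ) (D : Set (Ω → ℝ)) (hD : Coherent κ D)
    (hle : ∀ f ∈ Gambles Ω, lowPrev D f ≤ upPrev D f) :
    (∀ f ∈ Gambles Ω, lowPrev D f = upPrev D f) ↔
      ∀ f ∈ Gambles Ω, f ∉ D → ∀ ε : ℝ, 0 < ε → ((fun _ => ε) - f) ∈ D := by
  obtain ⟨hκop, hκd⟩ := hκ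
  obtain ⟨hDG, hDeq, hDneg⟩ := hD
  have hdomEq := hκd D ⟨hDG, hDeq, hDneg⟩
  have hdom : ∀ g ∈ Gambles Ω, ∀ f ∈ D, f ≤ g → g ∈ D := by
    intro g hg f hf hfg
    rw [hdomEq]; exact ⟨hg, f, hf, hfg⟩
  have hsub : D ∪ Lpos Ω ⊆ Gambles Ω := by
    rintro f (hf | hf)
    · exact hDG hf
    · exact hf.1
  have hposD : Lpos Ω ⊆ D := by
    intro f hf
    have := hκop.extensive _ hsub (Or.inr hf)
    rwa [hDeq] at this
  have hnotneg : ∀ f ∈ D, ¬ f ≤ 0 := by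
    intro f hf hle0
    have : f ∈ D ∩ Lneg0 Ω := ⟨hf, hDG hf, hle0⟩
    rw [hDneg] at this; exact this
  have hgsub : ∀ f ∈ Gambles Ω, ∀ μ : ℝ, (f - fun _ => μ) ∈ Gambles Ω := by
    rintro f ⟨M, hM⟩ μ
    exact ⟨M + |μ|, fun ω => by
      have := hM ω
      have := abs_sub (f ω) μ
      simp only [Pi.sub_apply]
      calc |f ω - μ| ≤ |f ω| + |μ| := abs_sub _ _
        _ ≤ M + |μ| := by linarith⟩
  have hgsub' : ∀ f ∈ Gambles Ω, ∀ μ : ℝ, ((fun _ => μ) - f) ∈ Gambles Ω := by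
    rintro f ⟨M, hM⟩ μ
    exact ⟨|μ| + M, fun ω => by
      have := hM ω
      simp only [Pi.sub_apply]
      calc |μ - f ω| ≤ |μ| + |f ω| := abs_sub _ _
        _ ≤ |μ| + M := by linarith⟩
  have hAne : ∀ f ∈ Gambles Ω, {μ : ℝ | (f - fun _ => μ) ∈ D}.Nonempty := by
    rintro f hf
    obtain ⟨M, hM⟩ := hf
    refine ⟨-M - 1, hposD ⟨hgsub f ⟨M, hM⟩ _, ?_, ?_⟩⟩
    · intro ω
      have := hM ω
      have := abs_le.mp this
      simp only [Pi.sub_apply, Pi.zero_apply]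
      linarith [this.1]
    · intro h0
      obtain ⟨ω⟩ := ‹Nonempty Ω›
      have := congrFun h0 ω
      have h1 := (abs_le.mp (hM ω)).1
      simp only [Pi.sub_apply, Pi.zero_apply] at this
      linarith
  have hBne : ∀ f ∈ Gambles Ω, {μ : ℝ | ((fun _ => μ) - f) ∈ D}.Nonempty := by
    rintro f hf
    obtain ⟨M, hM⟩ := hf
    refine ⟨M + 1, hposD ⟨hgsub' f ⟨M, hM⟩ _, ?_, ?_⟩⟩
    · intro ω
      have := (abs_le.mp (hM ω)).2
      simp only [Pi.sub_apply, Pi.zero_apply]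
      linarith
    · intro h0
      obtain ⟨ω⟩ := ‹Nonempty Ω›
      have := congrFun h0 ω
      have h1 := (abs_le.mp (hM ω)).2
      simp only [Pi.sub_apply, Pi.zero_apply] at this
      linarith
  have hAbdd : ∀ f ∈ Gambles Ω, BddAbove {μ : ℝ | (f - fun _ => μ) ∈ D} := by
    rintro f ⟨M, hM⟩
    refine ⟨M, fun μ hμ => ?_⟩
    by_contra h
    push_neg at h
    refine hnotneg _ hμ (fun ω => ?_)
    have := (abs_le.mp (hM ω)).2
    simp only [Pi.sub_apply, Pi.zero_apply]
    linarith
  have hBbdd : ∀ f ∈ Gambles Ω, BddBelow {μ : ℝ | ((fun _ => μ) - f) ∈ D} := by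
    rintro f ⟨M, hM⟩
    refine ⟨-M, fun μ hμ => ?_⟩
    by_contra h
    push_neg at h
    refine hnotneg _ hμ (fun ω => ?_)
    have := (abs_le.mp (hM ω)).1
    simp only [Pi.sub_apply, Pi.zero_apply]
    linarith
  constructor
  · intro heq f hf hfD ε hε
    have hsup_le : lowPrev D f ≤ 0 := by
      apply csSup_le (hAne f hf)
      intro μ hμ
      by_contra h
      push_neg at h
      exact hfD (hdom f hf _ hμ (fun ω => by
        simp only [Pi.sub_apply]; linarith))
    have hlt : upPrev D f < ε := by
      have := heq f hf
      rw [← this]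
      linarith
    obtain ⟨μ, hμ, hμε⟩ := exists_lt_of_csInf_lt (hBne f hf) hlt
    refine hdom _ (hgsub' f hf ε) _ hμ (fun ω => ?_)
    simp only [Pi.sub_apply]
    linarith
  · intro hcond f hf
    refine le_antisymm (hle f hf) ?_
    by_contra h
    push_neg at h
    set P := lowPrev D f with hP
    set Q := upPrev D f with hQ
    set μ := (P + Q) / 2 with hμdef
    have hPμ : P < μ := by rw [hμdef]; linarith
    have hμQ : μ < Q := by rw [hμdef]; linarith
    have hfμ : (f - fun _ => μ) ∉ D := by
      intro hc
      have : μ ≤ P := le_csSup (hAbdd f hf) hc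
      linarith
    have hεpos : (0:ℝ) < (Q - μ) / 2 := by linarith
    have hmem := hcond _ (hgsub f hf μ) hfμ _ hεpos
    have heq2 : ((fun _ => (Q - μ) / 2) - (f - fun _ => μ)) =
        ((fun _ => (Q - μ) / 2 + μ) - f) := by
      funext ω; simp only [Pi.sub_apply]; ring
    rw [heq2] at hmem
    have : Q ≤ (Q - μ) / 2 + μ := csInf_le (hBbdd f hf) hmem
    linarith
end

section
/- Let Ω be a finite nonempty set, κ ∈ K_d, D ⊆ L κ-coherent, and let P_D(f) := sup{μ ∈ ℝ : f − μ ∈ D} be the induced lower prevision. Then the closure of D in the topology of pointwise convergence on L (the product topology on ℝ^Ω) equals {f ∈ L : P_D(f) ≥ 0}. -/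
open Set

/-- for finite `Ω`, the closure of a κ-coherent set `D` in the topology
of pointwise convergence is `{f ∈ L : P_D(f) ≥ 0}`. -/
theorem stmt14 {Ω : Type*} [Finite Ω] [Nonempty Ω] (κ : Set (Ω → ℝ) → Set (Ω → ℝ))
    (hκ : InKd κ) (D : Set (Ω → ℝ)) (hD : Coherent κ D) :
    closure D = {f | f ∈ Gambles Ω ∧ 0 ≤ lowPrev D f} := by
  -- every function on a finite set is a gamble
  have hG : ∀ f : Ω → ℝ, f ∈ Gambles Ω := fun f => Finite.exists_le _
  -- D is closed under dominance
  have hdom : ClosedUnderDominance D := hκ.2 D hD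
  have hmem : ∀ f g : Ω → ℝ, f ∈ D → f ≤ g → g ∈ D := by
    intro f g hf hfg
    rw [hdom]
    exact ⟨hG g, f, hf, hfg⟩
  -- positive gambles are in D
  have hpos : Lpos Ω ⊆ D := by
    have h1 : D ∪ Lpos Ω ⊆ Gambles Ω := fun f _ => hG f
    have := hκ.1.extensive (D ∪ Lpos Ω) h1
    rw [hD.2.1] at this
    exact fun f hf => this (Or.inr hf)
  -- D avoids partial loss
  have hapl : ∀ f ∈ D, ∃ ω, 0 < f ω := by
    intro f hf
    by_contra h
    push_neg at h
    have : f ∈ D ∩ Lneg0 Ω := ⟨hf, hG f, fun ω => h ω⟩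
    rw [hD.2.2] at this
    exact this
  -- the set defining the lower prevision
  have hdown : ∀ (f : Ω → ℝ) (μ μ' : ℝ), μ' ≤ μ →
      μ ∈ {μ : ℝ | (f - fun _ => μ) ∈ D} → μ' ∈ {μ : ℝ | (f - fun _ => μ) ∈ D} := by
    intro f μ μ' hle hμ
    exact hmem _ _ hμ (fun ω => by simp only [Pi.sub_apply]; linarith)
  have hne : ∀ f : Ω → ℝ, Set.Nonempty {μ : ℝ | (f - fun _ => μ) ∈ D} := by
    intro f
    obtain ⟨M, hM⟩ := hG f
    refine ⟨-(M + 1), hpos ⟨hG _, fun ω => ?_, ?_⟩⟩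
    · simp only [Pi.sub_apply]
      have := hM ω
      have := abs_le.mp this
      simp only [Pi.zero_apply]
      linarith [this.1]
    · intro h
      obtain ⟨ω⟩ := ‹Nonempty Ω›
      have := congrFun h ω
      simp only [Pi.sub_apply, Pi.zero_apply] at this
      have := abs_le.mp (hM ω)
      linarith [this.1]
  have hbdd : ∀ f : Ω → ℝ, BddAbove {μ : ℝ | (f - fun _ => μ) ∈ D} := by
    intro f
    obtain ⟨M, hM⟩ := hG f
    refine ⟨M, fun μ hμ => ?_⟩
    obtain ⟨ω, hω⟩ := hapl _ hμ
    simp only [Pi.sub_apply] at hω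
    have := abs_le.mp (hM ω)
    linarith [this.2]
  -- key: 0 ≤ lowPrev D f ↔ ∀ ε > 0, f + ε ∈ D
  have hkey : ∀ f : Ω → ℝ, ∀ ε : ℝ, 0 < ε → 0 ≤ lowPrev D f →
      (f + fun _ => ε) ∈ D := by
    intro f ε hε hP
    have hlt : -ε < sSup {μ : ℝ | (f - fun _ => μ) ∈ D} := lt_of_lt_of_le (by linarith) hP
    obtain ⟨μ, hμ, hμlt⟩ := exists_lt_of_lt_csSup (hne f) hlt
    have : (-ε) ∈ {μ : ℝ | (f - fun _ => μ) ∈ D} := hdown f μ (-ε) hμlt.le hμ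
    have h2 : (f - fun _ => (-ε : ℝ)) ∈ D := this
    have heq : (f - fun _ => (-ε : ℝ)) = (f + fun _ => ε) := by
      funext ω; simp [sub_neg_eq_add]
    rwa [heq] at h2
  ext f
  simp only [Set.mem_setOf_eq]
  constructor
  · intro hf
    refine ⟨hG f, ?_⟩
    -- for every ε > 0, -ε is in the set
    have hε : ∀ ε : ℝ, 0 < ε → (-ε) ∈ {μ : ℝ | (f - fun _ => μ) ∈ D} := by
      intro ε hε
      have hopen : IsOpen {h : Ω → ℝ | ∀ ω, h ω < f ω + ε} := by
        have : {h : Ω → ℝ | ∀ ω, h ω < f ω + ε} =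
            Set.pi Set.univ (fun ω => Set.Iio (f ω + ε)) := by
          ext h; simp [Set.mem_pi]
        rw [this]
        exact isOpen_set_pi Set.finite_univ (fun ω _ => isOpen_Iio)
      have hfmem : f ∈ {h : Ω → ℝ | ∀ ω, h ω < f ω + ε} := fun ω => by linarith
      obtain ⟨g, hgU, hgD⟩ := (mem_closure_iff.mp hf) _ hopen hfmem
      have : (f - fun _ => -ε) ∈ D := by
        refine hmem g _ hgD fun ω => ?_
        simp only [Pi.sub_apply]
        have := hgU ω
        linarith
      exact this
    have : ∀ ε : ℝ, 0 < ε → -ε ≤ lowPrev D f := fun ε h =>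
      le_csSup (hbdd f) (hε ε h)
    by_contra hneg
    push_neg at hneg
    have := this (-(lowPrev D f) / 2) (by linarith)
    linarith
  · rintro ⟨-, hP⟩
    have hseq : ∀ n : ℕ, (f + fun _ => (1 : ℝ) / (n + 1)) ∈ D := by
      intro n
      exact hkey f _ (by positivity) hP
    have hT : Filter.Tendsto (fun n : ℕ => f + fun _ => (1 : ℝ) / (n + 1))
        Filter.atTop (nhds f) := by
      rw [tendsto_pi_nhds]
      intro ω
      have : Filter.Tendsto (fun n : ℕ => f ω + 1 / (n + 1)) Filter.atTop (nhds (f ω + 0)) :=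
        Filter.Tendsto.const_add _ tendsto_one_div_add_atTop_nhds_zero_nat
      simpa using this
    exact mem_closure_of_tendsto hT (Filter.Eventually.of_forall hseq)
end

section
/- Let P : L → ℝ be a monotone functional (f ≤ g implies P(f) ≤ P(g)) and set D_P := L⁺ ∪ {f ∈ L : P(f) > 0}. Then the following are equivalent: (a) D_P is κ-coherent for some closure operator κ ∈ K_d; (b) D_P is closed under dominance and L⁻₀ ∩ κ₄(D_P ∪ L⁺) = ∅; (c) L⁻₀ ∩ κ₄(D_P ∪ L⁺) = ∅, where κ₄(G) := {g ∈ L : ∃ f ∈ G, g ≥ f}. Moreover, if P(0) = 0 then D_P is κ₄-coherent. -/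
open Set

/-- The closure operator `κ₄`, associated with closure under dominance. -/
def k4 {Ω : Type*} (G : Set (Ω → ℝ)) : Set (Ω → ℝ) :=
  {g | g ∈ Gambles Ω ∧ ∃ f ∈ G, f ≤ g}

/-- `D_P = L⁺ ∪ {f ∈ L : P(f) > 0}`. -/
def DP {Ω : Type*} (P : (Ω → ℝ) → ℝ) : Set (Ω → ℝ) :=
  Lpos Ω ∪ {f ∈ Gambles Ω | 0 < P f}

/-- for a monotone functional `P`, the following are equivalent:
(a) `D_P` is κ-coherent for some `κ ∈ K_d`; (b) `D_P` is closed under dominance and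
`L⁻₀ ∩ κ₄(D_P ∪ L⁺) = ∅`; (c) `L⁻₀ ∩ κ₄(D_P ∪ L⁺) = ∅`. Moreover, if `P(0) = 0`
then `D_P` is κ₄-coherent. -/
theorem stmt15 {Ω : Type*} [Nonempty Ω] (P : (Ω → ℝ) → ℝ)
    (hmono : ∀ f g : Ω → ℝ, f ∈ Gambles Ω → g ∈ Gambles Ω → f ≤ g → P f ≤ P g) :
    ((∃ κ : Set (Ω → ℝ) → Set (Ω → ℝ), InKd κ ∧ Coherent κ (DP P)) ↔
        Lneg0 Ω ∩ k4 (DP P ∪ Lpos Ω) = ∅) ∧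
      ((ClosedUnderDominance (DP P) ∧ Lneg0 Ω ∩ k4 (DP P ∪ Lpos Ω) = ∅) ↔
        Lneg0 Ω ∩ k4 (DP P ∪ Lpos Ω) = ∅) ∧
      (P 0 = 0 → Coherent k4 (DP P)) := by
  have h0G : (0 : Ω → ℝ) ∈ Gambles Ω := ⟨0, fun ω => by simp⟩
  have hDG : DP P ⊆ Gambles Ω := by
    rintro f (⟨hf, _⟩ | ⟨hf, _⟩) <;> exact hf
  have hLposD : Lpos Ω ⊆ DP P := subset_union_left
  have hunion : DP P ∪ Lpos Ω = DP P := union_eq_self_of_subset_right hLposD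
  have hkey : k4 (DP P ∪ Lpos Ω) = DP P := by
    rw [hunion]
    ext g
    constructor
    · rintro ⟨hg, f, hf, hfg⟩
      rcases hf with ⟨hfG, hf0, hfne⟩ | ⟨hfG, hP⟩
      · left
        refine ⟨hg, le_trans hf0 hfg, ?_⟩
        obtain ⟨ω, hω⟩ := Function.ne_iff.mp hfne
        have hpos : 0 < f ω := lt_of_le_of_ne (hf0 ω) (Ne.symm hω)
        intro h
        have h1 := hfg ω
        rw [h] at h1
        simp only [Pi.zero_apply] at h1
        linarith
      · right
        exact ⟨hg, lt_of_lt_of_le hP (hmono f g hfG hg hfg)⟩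
    · intro hg
      exact ⟨hDG hg, g, hg, le_refl g⟩
  have hk4clos : IsClosureOp Ω k4 := by
    refine ⟨?_, ?_, ?_, ?_⟩
    · intro E _ g hg; exact hg.1
    · intro E hE f hf; exact ⟨hE hf, f, hf, le_refl f⟩
    · rintro E E' _ _ hsub g ⟨hg, f, hf, hfg⟩; exact ⟨hg, f, hsub hf, hfg⟩
    · intro E _
      ext g; constructor
      · rintro ⟨hg, h, ⟨_, f, hf, hfh⟩, hhg⟩; exact ⟨hg, f, hf, le_trans hfh hhg⟩
      · rintro ⟨hg, f, hf, hfg⟩; exact ⟨hg, g, ⟨hg, f, hf, hfg⟩, le_refl g⟩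
  have hk4Kd : InKd (Ω := Ω) k4 := by
    refine ⟨hk4clos, ?_⟩
    intro E ⟨hEG, hEeq, _⟩
    show E = k4 E
    apply Subset.antisymm
    · intro f hf; exact ⟨hEG hf, f, hf, le_refl f⟩
    · rintro g ⟨hg, f, hf, hfg⟩
      rw [← hEeq]
      exact ⟨hg, f, Or.inl hf, hfg⟩
  have hc : ∀ (h : Lneg0 Ω ∩ k4 (DP P ∪ Lpos Ω) = ∅), DP P ∩ Lneg0 Ω = ∅ := by
    intro h
    rw [hkey] at h
    rw [inter_comm]; exact h
  refine ⟨⟨?_, ?_⟩, ⟨fun h => h.2, fun h => ⟨?_, h⟩⟩, ?_⟩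
  · rintro ⟨κ, _, _, heq, hdisj⟩
    rw [hkey, inter_comm]
    -- need k4(DP P ∪ Lpos) = DP P which is hkey, and DP P ∩ Lneg0 = ∅
    exact hdisj
  · intro h
    exact ⟨k4, hk4Kd, hDG, hkey, hc h⟩
  · show DP P = k4 (DP P)
    conv_lhs => rw [← hkey, hunion]
  · intro hP0
    refine ⟨hDG, hkey, ?_⟩
    apply eq_empty_iff_forall_notMem.mpr
    rintro f ⟨hfD, _, hfle⟩
    rcases hfD with ⟨_, hf0, hfne⟩ | ⟨hfG, hPf⟩
    · exact hfne (le_antisymm hfle hf0)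
    · have := hmono f 0 hfG h0G hfle
      rw [hP0] at this
      linarith
end

section
/- Let κ be a closure operator such that κ(G) is closed under dominance for every G ⊆ L, and let D ⊆ L contain L⁺. If there exists a gamble f such that f − μ ∈ D for every real number μ, then E_κ(D) = L. Consequently, if E_κ(D) ≠ L then for every gamble f the set {μ ∈ ℝ : f − μ ∈ D} is nonempty and bounded above, so the lower prevision P_D(f) := sup{μ ∈ ℝ : f − μ ∈ D} is a real number. -/
open Set

private lemma stmt16_aux {Ω : Type*} (κ : Set (Ω → ℝ) → Set (Ω → ℝ))
    (hκ : IsClosureOp Ω κ) (hdom : ∀ G ⊆ Gambles Ω, ClosedUnderDominance (κ G))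
    (D : Set (Ω → ℝ)) (hD : D ⊆ Gambles Ω)
    (f : Ω → ℝ) (hf : f ∈ Gambles Ω)
    (h : ∀ μ₀ : ℝ, ∃ μ : ℝ, μ₀ ≤ μ ∧ (f - fun _ => μ) ∈ D) :
    natExt κ D = Gambles Ω := by
  have hsub : D ∪ Lpos Ω ⊆ Gambles Ω := by
    intro x hx
    rcases hx with hx | hx
    · exact hD hx
    · exact hx.1
  apply Set.Subset.antisymm (hκ.maps_to _ hsub)
  intro g hg
  obtain ⟨M, hM⟩ := hf
  obtain ⟨N, hN⟩ := hg
  obtain ⟨μ, hμ, hmem⟩ := h (M + N)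
  have hdomκ := hdom (D ∪ Lpos Ω) hsub
  rw [ClosedUnderDominance] at hdomκ
  rw [hdomκ]
  refine ⟨⟨N, hN⟩, (f - fun _ => μ), hκ.extensive _ hsub (Or.inl hmem), ?_⟩
  intro ω
  have h1 := (abs_le.mp (hM ω)).2
  have h2 := (abs_le.mp (hN ω)).1
  simp only [Pi.sub_apply]
  linarith

/-- if `κ(G)` is always closed under dominance, `L⁺ ⊆ D` and there is a
gamble `f` with `f - μ ∈ D` for all real `μ`, then `E_κ(D) = L`; consequently, if
`E_κ(D) ≠ L` then for every gamble `f` the set `{μ : f - μ ∈ D}` is nonempty and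
bounded above, so `P_D(f)` is a real number. -/
theorem stmt16 {Ω : Type*} [Nonempty Ω] (κ : Set (Ω → ℝ) → Set (Ω → ℝ))
    (hκ : IsClosureOp Ω κ) (hdom : ∀ G ⊆ Gambles Ω, ClosedUnderDominance (κ G))
    (D : Set (Ω → ℝ)) (hD : D ⊆ Gambles Ω) (hL : Lpos Ω ⊆ D) :
    ((∃ f ∈ Gambles Ω, ∀ μ : ℝ, (f - fun _ => μ) ∈ D) → natExt κ D = Gambles Ω) ∧
      (natExt κ D ≠ Gambles Ω →
        ∀ f ∈ Gambles Ω, {μ : ℝ | (f - fun _ => μ) ∈ D}.Nonempty ∧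
          BddAbove {μ : ℝ | (f - fun _ => μ) ∈ D}) := by
  constructor
  · rintro ⟨f, hf, hall⟩
    exact stmt16_aux κ hκ hdom D hD f hf (fun μ₀ => ⟨μ₀, le_refl _, hall μ₀⟩)
  · intro hne f hf
    constructor
    · obtain ⟨M, hM⟩ := hf
      refine ⟨-(M + 1), hL ?_⟩
      have hpos : ∀ ω, 0 < f ω - (-(M + 1)) := by
        intro ω
        have := (abs_le.mp (hM ω)).1
        linarith
      refine ⟨⟨2 * M + 1, ?_⟩, ?_, ?_⟩
      · intro ω
        have := abs_le.mp (hM ω)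
        simp only [Pi.sub_apply]
        rw [abs_le]
        constructor <;> linarith [this.1, this.2]
      · intro ω
        exact le_of_lt (hpos ω)
      · intro h0
        obtain ⟨ω⟩ := ‹Nonempty Ω›
        have := congrFun h0 ω
        simp only [Pi.sub_apply] at this
        exact absurd this (ne_of_gt (hpos ω))
    · by_contra hub
      apply hne
      apply stmt16_aux κ hκ hdom D hD f hf
      intro μ₀
      rw [bddAbove_def] at hub
      push_neg at hub
      obtain ⟨μ, hμ, hlt⟩ := hub μ₀
      exact ⟨μ, le_of_lt hlt, hμ⟩
end

section
/- Let κ ∈ K_d, let D ⊆ L be κ-coherent, and let P_D(f) := sup{μ ∈ ℝ : f − μ ∈ D} be the induced lower prevision. Call a linear prevision a linear functional P on the space of bounded real-valued functions on Ω that is monotone (f ≤ g implies P(f) ≤ P(g)) and satisfies P(1) = 1, where 1 is the constant function with value 1. Then {P linear prevision : P(f) ≥ P_D(f) for all f ∈ L} = {P linear prevision : P(f) ≥ 0 for all f ∈ D}. -/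
open Set

/-- A linear prevision: a linear functional on the bounded functions on `Ω` that is
monotone and maps the constant gamble `1` to `1`. -/
def IsLinPrev {Ω : Type*} (P : (Ω → ℝ) → ℝ) : Prop :=
  (∀ f g : Ω → ℝ, f ∈ Gambles Ω → g ∈ Gambles Ω → P (f + g) = P f + P g) ∧
  (∀ (c : ℝ) (f : Ω → ℝ), f ∈ Gambles Ω → P (c • f) = c * P f) ∧
  (∀ f g : Ω → ℝ, f ∈ Gambles Ω → g ∈ Gambles Ω → f ≤ g → P f ≤ P g) ∧
  P (fun _ => 1) = 1

/-- the linear previsions dominating `P_D` on all gambles are exactly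
the linear previsions that are nonnegative on `D`. -/
theorem stmt17 {Ω : Type*} [Nonempty Ω] (κ : Set (Ω → ℝ) → Set (Ω → ℝ))
    (hκ : InKd κ) (D : Set (Ω → ℝ)) (hD : Coherent κ D) :
    {P : (Ω → ℝ) → ℝ | IsLinPrev P ∧ ∀ f ∈ Gambles Ω, lowPrev D f ≤ P f} =
      {P : (Ω → ℝ) → ℝ | IsLinPrev P ∧ ∀ f ∈ D, 0 ≤ P f} := by
  obtain ⟨hclo, _hdom⟩ := hκ
  obtain ⟨hDG, hfix, hdisj⟩ := hD
  ext P
  simp only [mem_setOf_eq]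
  constructor
  · rintro ⟨hP, h⟩
    refine ⟨hP, fun f hf => ?_⟩
    have hfG : f ∈ Gambles Ω := hDG hf
    obtain ⟨M, hM⟩ := hfG
    have hbdd : BddAbove {μ : ℝ | (f - fun _ => μ) ∈ D} := by
      refine ⟨M, fun μ hμ => ?_⟩
      by_contra hlt
      push_neg at hlt
      have hmem : (f - fun _ => μ) ∈ D ∩ Lneg0 Ω := by
        refine ⟨hμ, hDG hμ, fun ω => ?_⟩
        have h1 : f ω ≤ M := (abs_le.mp (hM ω)).2
        simp only [Pi.sub_apply, Pi.zero_apply]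
        linarith
      rw [hdisj] at hmem
      exact hmem.elim
    have h0 : (0:ℝ) ∈ {μ : ℝ | (f - fun _ => μ) ∈ D} := by
      have : (f - fun _ => (0:ℝ)) = f := by funext ω; simp
      simpa [this] using hf
    exact (le_csSup hbdd h0).trans (h f (hDG hf))
  · rintro ⟨hP, h⟩
    refine ⟨hP, fun f hfG => ?_⟩
    obtain ⟨hadd, hsmul, _hmono, hone⟩ := hP
    obtain ⟨M, hM⟩ := hfG
    have hLpos : Lpos Ω ⊆ D := by
      intro g hg
      rw [← hfix]
      exact hclo.extensive _ (union_subset hDG (fun x hx => hx.1)) (Or.inr hg)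
    have hne : (-(M+1)) ∈ {μ : ℝ | (f - fun _ => μ) ∈ D} := by
      apply hLpos
      have hω₀ := Classical.arbitrary Ω
      refine ⟨⟨2*M+1, fun ω => ?_⟩, fun ω => ?_, fun hz => ?_⟩
      · have := abs_le.mp (hM ω)
        simp only [Pi.sub_apply]
        rw [abs_le]
        constructor <;> [skip; skip] <;> linarith [this.1, this.2,
          abs_nonneg (f ω), le_abs_self (f ω), neg_abs_le (f ω), hM ω]
      · have := abs_le.mp (hM ω)
        simp only [Pi.sub_apply, Pi.zero_apply]
        linarith [this.1]
      · have := congrFun hz hω₀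
        have h2 := abs_le.mp (hM hω₀)
        simp only [Pi.sub_apply, Pi.zero_apply] at this
        linarith [h2.1]
    refine csSup_le ⟨_, hne⟩ (fun μ hμ => ?_)
    have hgD : (f - fun _ => μ) ∈ D := hμ
    have hgG : (f - fun _ => μ) ∈ Gambles Ω := hDG hgD
    have hcG : (fun _ : Ω => μ) ∈ Gambles Ω := ⟨|μ|, fun ω => le_refl _⟩
    have h1G : (fun _ : Ω => (1:ℝ)) ∈ Gambles Ω := ⟨1, fun ω => by norm_num⟩
    have hsum : P ((f - fun _ => μ) + fun _ => μ) = P (f - fun _ => μ) + P (fun _ => μ) :=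
      hadd _ _ hgG hcG
    have heq : (f - fun _ => μ) + (fun _ => μ) = f := by funext ω; simp
    have hconst : P (fun _ : Ω => μ) = μ := by
      have : (fun _ : Ω => μ) = μ • (fun _ : Ω => (1:ℝ)) := by funext ω; simp
      rw [this, hsmul μ _ h1G, hone, mul_one]
    rw [heq, hconst] at hsum
    have := h _ hgD
    linarith
end

section
/- Let κ ∈ K_d and let D ⊆ L be κ-coherent and closed under addition (f, g ∈ D implies f + g ∈ D). Then there exists a linear prevision P — a linear functional on the space of bounded real-valued functions on Ω that is monotone (f ≤ g implies P(f) ≤ P(g)) and satisfies P(1) = 1 — such that P(f) ≥ 0 for every f ∈ D. -/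
open Set

def gamblesSubmodule (Ω : Type*) : Submodule ℝ (Ω → ℝ) where
  carrier := Gambles Ω
  zero_mem' := ⟨0, by simp⟩
  add_mem' := by
    rintro f g ⟨M, hM⟩ ⟨N, hN⟩
    exact ⟨M + N, fun ω => (abs_add_le _ _).trans (add_le_add (hM ω) (hN ω))⟩
  smul_mem' := by
    rintro c f ⟨M, hM⟩
    refine ⟨|c| * M, fun ω => ?_⟩
    calc |(c • f) ω| = |c| * |f ω| := by simp [abs_mul]
      _ ≤ |c| * M := mul_le_mul_of_nonneg_left (hM ω) (abs_nonneg c)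

lemma mem_gambles_iff {Ω : Type*} (f : Ω → ℝ) : f ∈ gamblesSubmodule Ω ↔ f ∈ Gambles Ω := Iff.rfl

noncomputable def supF {Ω : Type*} (f : Ω → ℝ) : ℝ := ⨆ ω, f ω

lemma bddAbove_of_gamble {Ω : Type*} {f : Ω → ℝ} (hf : f ∈ Gambles Ω) :
    BddAbove (Set.range f) := by
  obtain ⟨M, hM⟩ := hf
  exact ⟨M, by rintro x ⟨ω, rfl⟩; exact (abs_le.mp (hM ω)).2⟩

lemma le_supF {Ω : Type*} {f : Ω → ℝ} (hf : f ∈ Gambles Ω) (ω : Ω) : f ω ≤ supF f :=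
  le_ciSup (bddAbove_of_gamble hf) ω

lemma supF_le {Ω : Type*} [Nonempty Ω] {f : Ω → ℝ} {a : ℝ} (h : ∀ ω, f ω ≤ a) : supF f ≤ a :=
  ciSup_le h

def cone {Ω : Type*} (D : Set (Ω → ℝ)) : Set (Ω → ℝ) :=
  insert 0 {g | ∃ n : ℕ, ∃ h ∈ D, g = ((n : ℝ) + 1)⁻¹ • h}

noncomputable def NN {Ω : Type*} (D : Set (Ω → ℝ)) (f : Ω → ℝ) : ℝ :=
  sInf ((fun g => supF (f + g)) '' cone D)

/-- if `D` is κ-coherent for `κ ∈ K_d` and closed under addition, then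
there is a linear prevision that is nonnegative on `D`. -/
theorem stmt18 {Ω : Type*} [Nonempty Ω] (κ : Set (Ω → ℝ) → Set (Ω → ℝ))
    (hκ : InKd κ) (D : Set (Ω → ℝ)) (hD : Coherent κ D)
    (hadd : ∀ f ∈ D, ∀ g ∈ D, f + g ∈ D) :
    ∃ P : (Ω → ℝ) → ℝ, IsLinPrev P ∧ ∀ f ∈ D, 0 ≤ P f := by
  obtain ⟨⟨hmaps, hext, hmono, hidem⟩, -⟩ := hκ
  obtain ⟨hDG, hfix, hdisj⟩ := hD
  -- D has no nonpositive elements, so every element of D is positive somewhere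
  have hposp : ∀ h ∈ D, ∃ ω, 0 < h ω := by
    intro h hh
    by_contra hc
    push_neg at hc
    have : h ∈ D ∩ Lneg0 Ω := ⟨hh, hDG hh, fun ω => hc ω⟩
    rw [hdisj] at this
    exact this
  -- natural number multiples of elements of D belong to D
  have hnat : ∀ (n : ℕ), ∀ h ∈ D, ((n : ℝ) + 1) • h ∈ D := by
    intro n
    induction n with
    | zero => intro h hh; simpa using hh
    | succ n ih =>
      intro h hh
      have : ((n : ℝ) + 1 + 1) • h = ((n : ℝ) + 1) • h + h := by
        rw [add_smul, one_smul]
      rw [show ((n + 1 : ℕ) : ℝ) + 1 = ((n : ℝ) + 1) + 1 by push_cast; ring, this]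
      exact hadd _ (ih h hh) _ hh
  -- basic facts about the cone
  have hconeG : cone D ⊆ Gambles Ω := by
    rintro g (rfl | ⟨n, h, hh, rfl⟩)
    · exact (gamblesSubmodule Ω).zero_mem
    · exact (gamblesSubmodule Ω).smul_mem _ (hDG hh)
  have hconepos : ∀ g ∈ cone D, ∃ ω, 0 ≤ g ω := by
    rintro g (rfl | ⟨n, h, hh, rfl⟩)
    · exact ⟨Classical.arbitrary Ω, le_refl 0⟩
    · obtain ⟨ω, hω⟩ := hposp h hh
      refine ⟨ω, ?_⟩
      have hn : (0:ℝ) < (n : ℝ) + 1 := by positivity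
      have : (0:ℝ) ≤ ((n : ℝ) + 1)⁻¹ * h ω := by positivity
      simpa using this
  have hconeadd : ∀ g ∈ cone D, ∀ g' ∈ cone D, g + g' ∈ cone D := by
    rintro g (rfl | ⟨a, h, hh, rfl⟩) g' hg'
    · simpa using hg'
    · rcases hg' with (rfl | ⟨b, h', hh', rfl⟩)
      · simpa [cone] using Or.inr ⟨a, h, hh, rfl⟩
      · refine Or.inr ⟨a * b + a + b, ((b:ℝ)+1) • h + ((a:ℝ)+1) • h', hadd _ (hnat b h hh) _ (hnat a h' hh'), ?_⟩
        funext ω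
        have ha : ((a:ℝ)+1) ≠ 0 := by positivity
        have hb : ((b:ℝ)+1) ≠ 0 := by positivity
        simp only [Pi.add_apply, Pi.smul_apply, smul_eq_mul]
        push_cast
        field_simp
        ring
  have hconerat : ∀ q : ℚ, 0 < q → ∀ g ∈ cone D, (q : ℝ) • g ∈ cone D := by
    rintro q hq g (rfl | ⟨n, h, hh, rfl⟩)
    · simp [cone]
    · -- (q:ℝ) • ((n+1)⁻¹ • h) = (den(r))⁻¹ • (num(r) • h) where r = q/(n+1)
      set r : ℚ := q / ((n : ℚ) + 1) with hr
      have hrpos : 0 < r := by positivity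
      have hnum : 0 < r.num := Rat.num_pos.mpr hrpos
      obtain ⟨m, hm⟩ : ∃ m : ℕ, r.num = (m : ℤ) + 1 := ⟨(r.num - 1).toNat, by omega⟩
      obtain ⟨d, hd⟩ : ∃ d : ℕ, (r.den : ℤ) = (d : ℤ) + 1 := ⟨r.den - 1, by have := r.pos; omega⟩
      refine Or.inr ⟨d, ((m : ℝ) + 1) • h, hnat m h hh, ?_⟩
      have hcast : (r : ℝ) = ((m : ℝ) + 1) / ((d : ℝ) + 1) := by
        rw [Rat.cast_def]
        congr 1
        · exact_mod_cast congrArg (fun z : ℤ => (z : ℝ)) hm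
        · exact_mod_cast congrArg (fun z : ℤ => (z : ℝ)) hd
      have hq' : (q : ℝ) = (r : ℝ) * ((n : ℝ) + 1) := by
        have h1 : q = r * ((n : ℚ) + 1) := by rw [hr]; field_simp
        rw [h1]; push_cast; ring
      have hd1 : ((d:ℝ)+1) ≠ 0 := by positivity
      have hn1 : ((n:ℝ)+1) ≠ 0 := by positivity
      funext ω
      simp only [Pi.smul_apply, smul_eq_mul]
      rw [hq', hcast]
      field_simp
  have hzero_mem : (0 : Ω → ℝ) ∈ cone D := Or.inl rfl
  -- lower bound for NN and basic inequalities
  have hbddB : ∀ f ∈ Gambles Ω, BddBelow ((fun g => supF (f + g)) '' cone D) := by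
    intro f hf
    obtain ⟨M, hM⟩ := hf
    refine ⟨-M, ?_⟩
    rintro x ⟨g, hg, rfl⟩
    obtain ⟨ω, hω⟩ := hconepos g hg
    have : f ω + g ω ≤ supF (f + g) :=
      le_supF ((gamblesSubmodule Ω).add_mem ⟨M, hM⟩ (hconeG hg)) ω
    have h1 : -M ≤ f ω := (abs_le.mp (hM ω)).1
    linarith
  have hne : ∀ f : Ω → ℝ, ((fun g => supF (f + g)) '' cone D).Nonempty :=
    fun f => ⟨supF (f + 0), 0, hzero_mem, rfl⟩
  have hNle : ∀ f ∈ Gambles Ω, ∀ g ∈ cone D, NN D f ≤ supF (f + g) := by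
    intro f hf g hg
    exact csInf_le (hbddB f hf) ⟨g, hg, rfl⟩
  have hleN : ∀ (f : Ω → ℝ) (a : ℝ), (∀ g ∈ cone D, a ≤ supF (f + g)) → a ≤ NN D f := by
    intro f a h
    exact le_csInf (hne f) (by rintro x ⟨g, hg, rfl⟩; exact h g hg)
  -- subadditivity
  have hNadd : ∀ f ∈ Gambles Ω, ∀ f' ∈ Gambles Ω, NN D (f + f') ≤ NN D f + NN D f' := by
    intro f hf f' hf'
    have key : ∀ g ∈ cone D, ∀ g' ∈ cone D,
        NN D (f + f') ≤ supF (f + g) + supF (f' + g') := by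
      intro g hg g' hg'
      have h1 : NN D (f + f') ≤ supF (f + f' + (g + g')) :=
        hNle _ ((gamblesSubmodule Ω).add_mem hf hf') _ (hconeadd g hg g' hg')
      refine h1.trans (supF_le fun ω => ?_)
      have e1 : f ω + g ω ≤ supF (f + g) :=
        le_supF ((gamblesSubmodule Ω).add_mem hf (hconeG hg)) ω
      have e2 : f' ω + g' ω ≤ supF (f' + g') :=
        le_supF ((gamblesSubmodule Ω).add_mem hf' (hconeG hg')) ω
      simp only [Pi.add_apply]
      linarith
    -- combine: NN(f+f') - supF(f+g) ≤ NN f' etc.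
    have step1 : ∀ g ∈ cone D, NN D (f + f') - supF (f + g) ≤ NN D f' := by
      intro g hg
      refine hleN _ _ fun g' hg' => ?_
      have := key g hg g' hg'
      linarith
    have step2 : NN D (f + f') - NN D f' ≤ NN D f := by
      refine hleN _ _ fun g hg => ?_
      have := step1 g hg
      linarith
    linarith
  -- positive homogeneity (≤ direction)
  have hNhomle : ∀ c : ℝ, 0 < c → ∀ f ∈ Gambles Ω, NN D (c • f) ≤ c * NN D f := by
    intro c hc f hf
    have key : ∀ g ∈ cone D, NN D (c • f) ≤ c * supF (f + g) := by
      intro g hg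
      refine le_of_forall_pos_le_add fun ε hε => ?_
      obtain ⟨Mg, hMg⟩ := hconeG hg
      have hMg0 : 0 ≤ Mg := le_trans (abs_nonneg _) (hMg (Classical.arbitrary Ω))
      obtain ⟨q, hq1, hq2⟩ := exists_rat_btwn
        (lt_add_of_pos_right c (show (0:ℝ) < ε / (Mg + 1) by positivity))
      have hq0 : 0 < q := by
        have : (0:ℝ) < (q:ℝ) := hc.trans hq1
        exact_mod_cast this
      have hmem : (q : ℝ) • g ∈ cone D := hconerat q hq0 g hg
      have h1 : NN D (c • f) ≤ supF (c • f + (q:ℝ) • g) :=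
        hNle _ ((gamblesSubmodule Ω).smul_mem c hf) _ hmem
      refine h1.trans (supF_le fun ω => ?_)
      have e1 : f ω + g ω ≤ supF (f + g) :=
        le_supF ((gamblesSubmodule Ω).add_mem hf (hconeG hg)) ω
      have e2 : g ω ≤ Mg := (abs_le.mp (hMg ω)).2
      have e3 : ((q:ℝ) - c) * g ω ≤ ((q:ℝ) - c) * Mg :=
        mul_le_mul_of_nonneg_left e2 (by linarith)
      have e4 : ((q:ℝ) - c) * Mg ≤ (ε / (Mg + 1)) * Mg := by
        apply mul_le_mul_of_nonneg_right _ hMg0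
        linarith
      have e5 : (ε / (Mg + 1)) * Mg ≤ ε := by
        rw [div_mul_eq_mul_div, div_le_iff₀ (by positivity)]
        nlinarith
      have : c * (f ω + g ω) ≤ c * supF (f + g) := mul_le_mul_of_nonneg_left e1 hc.le
      simp only [Pi.add_apply, Pi.smul_apply, smul_eq_mul]
      nlinarith
    -- conclude NN(c•f)/c ≤ NN f
    have : NN D (c • f) / c ≤ NN D f := by
      refine hleN _ _ fun g hg => ?_
      rw [div_le_iff₀ hc]
      have := key g hg
      linarith [mul_comm c (supF (f + g))]
    calc NN D (c • f) = (NN D (c • f) / c) * c := by field_simp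
      _ ≤ NN D f * c := mul_le_mul_of_nonneg_right this hc.le
      _ = c * NN D f := mul_comm _ _
  have hNhom : ∀ c : ℝ, 0 < c → ∀ f ∈ Gambles Ω, NN D (c • f) = c * NN D f := by
    intro c hc f hf
    refine le_antisymm (hNhomle c hc f hf) ?_
    have h2 := hNhomle c⁻¹ (by positivity) (c • f) ((gamblesSubmodule Ω).smul_mem c hf)
    rw [smul_smul, inv_mul_cancel₀ hc.ne', one_smul] at h2
    have := mul_le_mul_of_nonneg_left h2 hc.le
    rw [← mul_assoc, mul_inv_cancel₀ hc.ne', one_mul] at this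
    linarith
  -- NN of constants: c ≤ NN (const c)
  have hNconst : ∀ c : ℝ, c ≤ NN D (fun _ => c) := by
    intro c
    refine hleN _ _ fun g hg => ?_
    obtain ⟨ω, hω⟩ := hconepos g hg
    have : (((fun _ => c) : Ω → ℝ) + g) ω ≤ supF (((fun _ => c) : Ω → ℝ) + g) :=
      le_supF ((gamblesSubmodule Ω).add_mem ⟨|c|, fun _ => le_refl _⟩ (hconeG hg)) ω
    simp only [Pi.add_apply] at this
    linarith
  -- set up Hahn-Banach on the submodule of gambles
  set E := gamblesSubmodule Ω with hE
  let oneE : E := ⟨(fun _ => 1), ⟨1, fun _ => by norm_num⟩⟩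
  have honeE : oneE ≠ 0 := by
    intro h
    have := congrFun (congrArg Subtype.val h) (Classical.arbitrary Ω)
    simp [oneE] at this
  let f₀ : E →ₗ.[ℝ] ℝ := LinearPMap.mkSpanSingleton oneE 1 honeE
  have hf₀ : ∀ x : f₀.domain, f₀ x ≤ NN D (((x : ↥E) : Ω → ℝ)) := by
    rintro ⟨x, hx⟩
    have hx' : x ∈ (ℝ ∙ oneE) := hx
    obtain ⟨c, hc⟩ := Submodule.mem_span_singleton.mp hx'
    have hxe : (⟨x, hx⟩ : f₀.domain) = ⟨c • oneE,
        Submodule.mem_span_singleton.mpr ⟨c, rfl⟩⟩ := Subtype.ext hc.symm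
    rw [hxe]
    have happ : f₀ ⟨c • oneE, Submodule.mem_span_singleton.mpr ⟨c, rfl⟩⟩ = c • (1:ℝ) :=
      LinearPMap.mkSpanSingleton'_apply oneE 1 _ c _
    rw [happ]
    have hval : (((c • oneE : ↥E) : Ω → ℝ)) = fun _ => c := by
      funext ω; simp [oneE]
    simp only [hval]
    simpa using hNconst c
  obtain ⟨G, hG1, hG2⟩ := exists_extension_of_le_sublinear f₀ (fun x : E => NN D (x : Ω → ℝ))
    (fun c hc x => hNhom c hc (x : Ω → ℝ) x.2)
    (fun x y => by simpa using hNadd (x : Ω → ℝ) x.2 (y : Ω → ℝ) y.2)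
    hf₀
  -- the linear prevision
  classical
  refine ⟨fun f => if h : f ∈ Gambles Ω then G ⟨f, h⟩ else 0, ⟨?_, ?_, ?_, ?_⟩, ?_⟩
  · -- additivity
    intro f g hf hg
    dsimp only
    rw [dif_pos (show f + g ∈ Gambles Ω from (gamblesSubmodule Ω).add_mem hf hg),
      dif_pos hf, dif_pos hg]
    have : (⟨f + g, (gamblesSubmodule Ω).add_mem hf hg⟩ : E) = ⟨f, hf⟩ + ⟨g, hg⟩ := rfl
    rw [this, map_add]
  · -- homogeneity
    intro c f hf
    dsimp only
    rw [dif_pos (show c • f ∈ Gambles Ω from (gamblesSubmodule Ω).smul_mem c hf), dif_pos hf]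
    have : (⟨c • f, (gamblesSubmodule Ω).smul_mem c hf⟩ : E) = c • (⟨f, hf⟩ : E) := rfl
    rw [this, map_smul, smul_eq_mul]
  · -- monotonicity
    intro f g hf hg hfg
    dsimp only
    rw [dif_pos hf, dif_pos hg]
    have hsub : (⟨f, hf⟩ : E) - ⟨g, hg⟩ = ⟨f - g, (gamblesSubmodule Ω).sub_mem hf hg⟩ := rfl
    have h1 : G (⟨f, hf⟩ - ⟨g, hg⟩) ≤ NN D (f - g) := by
      have := hG2 (⟨f, hf⟩ - ⟨g, hg⟩)
      rwa [hsub] at this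
    have h2 : NN D (f - g) ≤ supF (f - g + 0) :=
      hNle _ ((gamblesSubmodule Ω).sub_mem hf hg) _ hzero_mem
    have h3 : supF (f - g + 0) ≤ 0 := supF_le fun ω => by
      simp only [Pi.add_apply, Pi.sub_apply, Pi.zero_apply, add_zero]
      linarith [hfg ω]
    have := map_sub G (⟨f, hf⟩ : E) ⟨g, hg⟩
    linarith [h1, h2, h3, this.symm.le, this.le]
  · -- P 1 = 1
    have hone : (fun _ => (1:ℝ)) ∈ Gambles Ω := ⟨1, fun _ => by norm_num⟩
    dsimp only
    rw [dif_pos hone]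
    have hmem : oneE ∈ f₀.domain := Submodule.mem_span_singleton_self oneE
    have := hG1 ⟨oneE, hmem⟩
    have happ : f₀ ⟨oneE, hmem⟩ = 1 := LinearPMap.mkSpanSingleton_apply ℝ ℝ honeE 1
    rw [happ] at this
    have : G oneE = 1 := this
    convert this using 2
  · -- nonnegative on D
    intro f hf
    have hfG : f ∈ Gambles Ω := hDG hf
    dsimp only
    rw [dif_pos hfG]
    have hfC : f ∈ cone D := Or.inr ⟨0, f, hf, by norm_num⟩
    have h1 : G (-(⟨f, hfG⟩ : E)) ≤ NN D (-f) := hG2 (-(⟨f, hfG⟩ : E))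
    have h2 : NN D (-f) ≤ supF (-f + f) :=
      hNle _ ((gamblesSubmodule Ω).neg_mem hfG) _ hfC
    have h3 : supF (-f + f) ≤ 0 := supF_le fun ω => by simp
    have h4 : G (-(⟨f, hfG⟩ : E)) = -G ⟨f, hfG⟩ := map_neg G _
    linarith
end

section
/- Let κ ∈ K_d, let D ⊆ L be κ-coherent, and let P_D(f) := sup{μ ∈ ℝ : f − μ ∈ D} be the induced lower prevision. Let B ⊆ Ω be nonempty with P_D(1_B) > 0. Then for every gamble f, taking suprema in the extended reals, sup{μ ∈ ℝ : P_D(1_B·(f − μ)) > 0} ≤ sup{μ ∈ ℝ : 1_B·(f − μ) ∈ D} ≤ sup{μ ∈ ℝ : P_D(1_B·(f − μ)) ≥ 0}. -/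
open Set

/-- generalised Bayes rule bounds, with suprema in the extended reals:
`sup {μ : P_D(1_B(f-μ)) > 0} ≤ sup {μ : 1_B(f-μ) ∈ D} ≤ sup {μ : P_D(1_B(f-μ)) ≥ 0}`. -/
theorem stmt19 {Ω : Type*} [Nonempty Ω] (κ : Set (Ω → ℝ) → Set (Ω → ℝ))
    (hκ : InKd κ) (D : Set (Ω → ℝ)) (hD : Coherent κ D)
    (B : Set Ω) (hB : B.Nonempty)
    (hPB : 0 < lowPrev D (B.indicator fun _ => (1 : ℝ)))
    (f : Ω → ℝ) (hf : f ∈ Gambles Ω) :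
    sSup (Real.toEReal '' {μ : ℝ | 0 < lowPrev D (B.indicator (f - fun _ => μ))}) ≤
        sSup (Real.toEReal '' {μ : ℝ | B.indicator (f - fun _ => μ) ∈ D}) ∧
      sSup (Real.toEReal '' {μ : ℝ | B.indicator (f - fun _ => μ) ∈ D}) ≤
        sSup (Real.toEReal '' {μ : ℝ | 0 ≤ lowPrev D (B.indicator (f - fun _ => μ))}) := by
  have hdom := hκ.2 D hD
  constructor
  · apply sSup_le_sSup
    apply Set.image_mono
    intro μ hμ
    simp only [Set.mem_setOf_eq] at hμ ⊢
    set g := B.indicator (f - fun _ => μ) with hg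
    have hgG : g ∈ Gambles Ω := by
      obtain ⟨M, hM⟩ := hf
      refine ⟨M + |μ|, fun ω => ?_⟩
      by_cases h : ω ∈ B
      · rw [hg]
        simp only [Set.indicator_of_mem h, Pi.sub_apply]
        calc |f ω - μ| ≤ |f ω| + |μ| := abs_sub _ _
          _ ≤ M + |μ| := by linarith [hM ω]
      · rw [hg]
        simp only [Set.indicator_of_notMem h, abs_zero]
        have h1 := hM ω
        have h2 : (0:ℝ) ≤ |f ω| := abs_nonneg _
        have h3 : (0:ℝ) ≤ |μ| := abs_nonneg _
        linarith
    obtain ⟨ν, hν, hνpos⟩ : ∃ ν, (g - fun _ => ν) ∈ D ∧ 0 < ν := by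
      by_contra h
      push_neg at h
      have hle : lowPrev D g ≤ 0 := Real.sSup_le (fun x hx => h x hx) le_rfl
      linarith
    rw [hdom]
    refine ⟨hgG, g - fun _ => ν, hν, fun ω => ?_⟩
    simp only [Pi.sub_apply]
    linarith
  · apply sSup_le_sSup
    apply Set.image_mono
    intro μ hμ
    simp only [Set.mem_setOf_eq] at hμ ⊢
    have h0 : (B.indicator (f - fun _ => μ) - fun _ => (0:ℝ)) ∈ D := by
      have : (B.indicator (f - fun _ => μ) - fun _ => (0:ℝ)) = B.indicator (f - fun _ => μ) := by
        funext ω; simp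
      rw [this]; exact hμ
    exact Real.sSup_nonneg' ⟨0, h0, le_rfl⟩
end
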